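/- For the Lagrangian stationarity condition of the computation resource problem: if α > 0, x = 1, c > 0, θ ≥ 0, ψ > 0, ϱ = ω = 0, and 1 + β − c/f − Λ > 0, then the equation (α c)/(f² ln 2 · (1+β − c/f − Λ)) + θ c/f² = ψ has at most one solution f in the interval (c/(1+β−Λ), ∞). -/
import Mathlib


/-- the stationarity equation (αc)/(f² ln 2·(1+β−c/f−Λ)) + θc/f² = ψ
has at most one solution f on (c/(1+β−Λ), ∞), when α > 0, x = 1, c > 0, θ ≥ 0,
ψ > 0, ϱ = ω = 0. -/
theorem stmt10 (α β c Λ θ ψ x ϱ ω : ℝ) (hα : 0 < α) (hx : x = 1) (hc : 0 < c)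
    (hθ : 0 ≤ θ) (hψ : 0 < ψ) (hϱ : ϱ = 0) (hω : ω = 0) (hβΛ : 0 < 1 + β - Λ) :
    ∀ f₁ f₂ : ℝ, f₁ ∈ Set.Ioi (c / (1 + β - Λ)) → f₂ ∈ Set.Ioi (c / (1 + β - Λ)) →
      (α * c) / (f₁ ^ 2 * Real.log 2 * (1 + β - c / f₁ - Λ)) + θ * c / f₁ ^ 2 = ψ →
      (α * c) / (f₂ ^ 2 * Real.log 2 * (1 + β - c / f₂ - Λ)) + θ * c / f₂ ^ 2 = ψ →
      f₁ = f₂ := by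
  intro f₁ f₂ h₁ h₂ e₁ e₂
  simp only [Set.mem_Ioi] at h₁ h₂
  set a := 1 + β - Λ with ha
  have hca : 0 < c / a := div_pos hc hβΛ
  have hlog : 0 < Real.log 2 := Real.log_pos (by norm_num)
  -- basic facts for any f in the interval
  have hpos : ∀ f : ℝ, c / a < f → 0 < f ∧ 0 < a - c / f := by
    intro f hf
    have hf0 : 0 < f := lt_trans hca hf
    have : c / f < a := by
      rw [div_lt_iff₀ hf0]
      have := (div_lt_iff₀ hβΛ).mp hf
      linarith [this]
    exact ⟨hf0, by linarith⟩
  have hDpos : ∀ f : ℝ, c / a < f → 0 < f ^ 2 * Real.log 2 * (a - c / f) := by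
    intro f hf
    obtain ⟨hf0, hden⟩ := hpos f hf
    positivity
  -- key strict monotonicity
  have key : ∀ g₁ g₂ : ℝ, c / a < g₁ → g₁ < g₂ →
      (α * c) / (g₂ ^ 2 * Real.log 2 * (a - c / g₂)) + θ * c / g₂ ^ 2 <
      (α * c) / (g₁ ^ 2 * Real.log 2 * (a - c / g₁)) + θ * c / g₁ ^ 2 := by
    intro g₁ g₂ hg₁ hlt
    have hg₂ : c / a < g₂ := lt_trans hg₁ hlt
    obtain ⟨h10, h1d⟩ := hpos g₁ hg₁
    obtain ⟨h20, h2d⟩ := hpos g₂ hg₂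
    have hD1 := hDpos g₁ hg₁
    have hsq : g₁ ^ 2 < g₂ ^ 2 := by nlinarith
    have hdiv : c / g₂ < c / g₁ := div_lt_div_of_pos_left hc h10 hlt
    have hDlt : g₁ ^ 2 * Real.log 2 * (a - c / g₁) < g₂ ^ 2 * Real.log 2 * (a - c / g₂) := by
      have h1 : g₁ ^ 2 * Real.log 2 < g₂ ^ 2 * Real.log 2 :=
        mul_lt_mul_of_pos_right hsq hlog
      have h2 : a - c / g₁ < a - c / g₂ := by linarith
      have := mul_lt_mul h1 (le_of_lt h2) h1d (by positivity)
      linarith [mul_lt_mul_of_pos_left h2 (show (0:ℝ) < g₂ ^ 2 * Real.log 2 by positivity)]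
    have t1 : (α * c) / (g₂ ^ 2 * Real.log 2 * (a - c / g₂)) <
        (α * c) / (g₁ ^ 2 * Real.log 2 * (a - c / g₁)) :=
      div_lt_div_of_pos_left (by positivity) hD1 hDlt
    have t2 : θ * c / g₂ ^ 2 ≤ θ * c / g₁ ^ 2 :=
      div_le_div_of_nonneg_left (by positivity) (by positivity) (le_of_lt hsq)
    linarith
  have ea : ∀ f : ℝ, 1 + β - c / f - Λ = a - c / f := fun f => by rw [ha]; ring
  rw [ea] at e₁ e₂
  rcases lt_trichotomy f₁ f₂ with h | h | h
  · exact absurd (e₂.trans e₁.symm) (ne_of_lt (key f₁ f₂ h₁ h))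
  · exact h
  · exact absurd (e₁.trans e₂.symm) (ne_of_lt (key f₂ f₁ h₂ h))
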